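/- arXiv:1605.07284 — 3 statements merged into one kernel-verified Lean document; each statement's English description precedes it below -/
import Mathlib

section
/- Let A be a finite index set and for each j ∈ A let K_j ≥ 1 and R_j ≥ 1 be natural numbers. Suppose for each j ∈ A, each k ∈ {1,...,K_j}, and each r ∈ {1,...,R_j} we are given a vector v_{j,k,r} ∈ ℝ^D and a positive real weight c_{j,k,r} > 0, such that for every j and k the vectors in each group sum to zero: ∑_{r=1}^{R_j} v_{j,k,r} = 0. If D > ∑_{j ∈ A} K_j (R_j − 1), then the D×D matrix M = ∑_{j ∈ A} ∑_{k=1}^{K_j} ∑_{r=1}^{R_j} c_{j,k,r} · v_{j,k,r} v_{j,k,r}ᵀ is singular (not invertible). -/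
open Matrix

private lemma sum_mulVec' {m : ℕ} {α : Type*} (s : Finset α)
    (f : α → Matrix (Fin m) (Fin m) ℝ) (x : Fin m → ℝ) :
    (∑ a ∈ s, f a) *ᵥ x = ∑ a ∈ s, f a *ᵥ x := by
  ext i
  simp only [Matrix.mulVec, dotProduct, Matrix.sum_apply, Finset.sum_apply,
    Finset.sum_mul]
  rw [Finset.sum_comm]

private lemma vecMulVec_mulVec' {m : ℕ} (a b x : Fin m → ℝ) :
    Matrix.vecMulVec a b *ᵥ x = (b ⬝ᵥ x) • a := by
  ext i
  simp [Matrix.mulVec, Matrix.vecMulVec, dotProduct, Finset.mul_sum,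
    mul_assoc, mul_comm, mul_left_comm]

/-- Theorem 1 (algebraic content): if for each sensor `j` in a finite set and each
time `k ∈ {1,...,K j}` the vectors `v j k r ∈ ℝ^D`, `r ∈ {1,...,R j}`, sum to zero,
the weights `c j k r` are positive, and `D > ∑ j, K j * (R j - 1)`, then the matrix
`M = ∑ j ∑ k ∑ r, c j k r • v j k r (v j k r)ᵀ` is singular. -/
theorem singular_of_dim_gt (ι : Type*) [Fintype ι] (D : ℕ)
    (K R : ι → ℕ) (hK : ∀ j, 1 ≤ K j) (hR : ∀ j, 1 ≤ R j)
    (v : (j : ι) → Fin (K j) → Fin (R j) → (Fin D → ℝ))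
    (c : (j : ι) → Fin (K j) → Fin (R j) → ℝ)
    (hc : ∀ j k r, 0 < c j k r)
    (hsum : ∀ j k, ∑ r, v j k r = 0)
    (hD : (∑ j, K j * (R j - 1)) < D) :
    ¬ IsUnit (∑ j, ∑ k, ∑ r, c j k r • Matrix.vecMulVec (v j k r) (v j k r)) := by
  classical
  intro hM
  set M := ∑ j, ∑ k, ∑ r, c j k r • Matrix.vecMulVec (v j k r) (v j k r) with hMdef
  -- the spanning family indexed by a sigma type of cardinality ∑ j, K j * (R j - 1)
  let σ := (j : ι) × (Fin (K j) × Fin (R j - 1))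
  let f : σ → EuclideanSpace ℝ (Fin D) := fun p => WithLp.toLp 2 (v p.1 p.2.1 (Fin.castLE (Nat.sub_le _ _) p.2.2))
  let W : Submodule ℝ (EuclideanSpace ℝ (Fin D)) := Submodule.span ℝ (Set.range f)
  -- every v j k r lies in W
  have hmem : ∀ j k r, WithLp.toLp 2 (v j k r) ∈ W := by
    intro j k r
    by_cases h : (r : ℕ) < R j - 1
    · exact Submodule.subset_span ⟨⟨j, k, ⟨r, h⟩⟩, by simp [f, Fin.ext_iff]⟩
    · -- r is the last index; use the zero-sum relation
      have hr : (r : ℕ) = R j - 1 := le_antisymm (Nat.lt_succ_iff.mp (by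
        have := r.isLt
        omega)) (le_of_not_gt h)
      have hrel : (v j k r : Fin D → ℝ) = -∑ r' ∈ Finset.univ.erase r, v j k r' := by
        have := hsum j k
        rw [← Finset.add_sum_erase _ _ (Finset.mem_univ r)] at this
        have := eq_neg_of_add_eq_zero_left this
        exact this
      rw [hrel, WithLp.toLp_neg, WithLp.toLp_sum]
      refine neg_mem (Submodule.sum_mem _ ?_)
      intro r' hr'
      have hr'ne : r' ≠ r := Finset.ne_of_mem_erase hr'
      have hr'lt : (r' : ℕ) < R j - 1 := by
        have := r'.isLt
        rcases lt_or_eq_of_le (Nat.lt_succ_iff.mp (by omega) : (r' : ℕ) ≤ R j - 1) with h1 | h1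
        · exact h1
        · exact absurd (Fin.ext (h1.trans hr.symm)) hr'ne
      exact Submodule.subset_span ⟨⟨j, k, ⟨r', hr'lt⟩⟩, by simp [f, Fin.ext_iff]⟩
  -- finrank bound
  have hcard : Fintype.card σ = ∑ j, K j * (R j - 1) := by
    simp [σ, Fintype.card_sigma]
  have hfr : Module.finrank ℝ W < D := by
    have := finrank_range_le_card (R := ℝ) (M := EuclideanSpace ℝ (Fin D)) f
    have hWle : Module.finrank ℝ W ≤ Fintype.card σ := this
    omega
  have hWne : W ≠ ⊤ := by
    intro h
    rw [h] at hfr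
    simp [finrank_euclideanSpace] at hfr
  -- find a nonzero orthogonal vector
  have hWbot : Wᗮ ≠ ⊥ := by
    rw [Ne, Submodule.orthogonal_eq_bot_iff]
    exact hWne
  obtain ⟨x, hxW, hx0⟩ := Submodule.exists_mem_ne_zero_of_ne_bot hWbot
  let y : Fin D → ℝ := x.ofLp
  -- dot products vanish
  have hdot : ∀ j k r, v j k r ⬝ᵥ y = 0 := by
    intro j k r
    have := (Submodule.mem_orthogonal W x).mp hxW _ (hmem j k r)
    simpa [dotProduct, PiLp.inner_apply, RCLike.inner_apply, mul_comm] using this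
  -- M *ᵥ x = 0
  have hMx : M *ᵥ y = 0 := by
    rw [hMdef, sum_mulVec']
    refine Finset.sum_eq_zero fun j _ => ?_
    rw [sum_mulVec']
    refine Finset.sum_eq_zero fun k _ => ?_
    rw [sum_mulVec']
    refine Finset.sum_eq_zero fun r _ => ?_
    rw [Matrix.smul_mulVec, vecMulVec_mulVec', hdot, zero_smul, smul_zero]
  -- contradiction with invertibility
  have hxzero : y = 0 := by
    obtain ⟨u, hu⟩ := hM
    have : (↑u⁻¹ : Matrix (Fin D) (Fin D) ℝ) *ᵥ (M *ᵥ y) = y := by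
      rw [Matrix.mulVec_mulVec, ← hu, Units.inv_mul, Matrix.one_mulVec]
    rw [hMx, Matrix.mulVec_zero] at this
    exact this.symm
  exact hx0 (by ext i; exact congrFun hxzero i)
end

section
/- Let J_0 be a real positive definite D_θ×D_θ matrix. For each p = 1, ..., P let Φ_{θ,p} be a real D_θ×n_p matrix and Φ_{τ,p} a real D_p×n_p matrix with Φ_{τ,p} Φ_{τ,p}ᵀ invertible, and set S := J_0 + ∑_{p=1}^P (Φ_{θ,p} Φ_{θ,p}ᵀ − Φ_{θ,p} Φ_{τ,p}ᵀ (Φ_{τ,p} Φ_{τ,p}ᵀ)⁻¹ Φ_{τ,p} Φ_{θ,p}ᵀ). Then S is positive definite, J_0⁻¹ − S⁻¹ is positive semidefinite, and S⁻¹ = J_0⁻¹ if and only if for every p = 1, ..., P the range of Φ_{θ,p}ᵀ is contained in the range of Φ_{τ,p}ᵀ. -/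
open Matrix

lemma aux_eq_zero_of_mulVec {m n : ℕ} (M : Matrix (Fin m) (Fin n) ℝ)
    (h : ∀ x, M *ᵥ x = 0) : M = 0 := by
  ext i j
  have := congrFun (h (Pi.single j 1)) i
  simpa [Matrix.mulVec_single] using this

lemma aux_block {Dθ D n : ℕ} (A : Matrix (Fin Dθ) (Fin n) ℝ)
    (B : Matrix (Fin D) (Fin n) ℝ) (hB : IsUnit (B * Bᵀ)) :
    (A * Aᵀ - A * Bᵀ * (B * Bᵀ)⁻¹ * B * Aᵀ).PosSemidef ∧
      ((A * Aᵀ - A * Bᵀ * (B * Bᵀ)⁻¹ * B * Aᵀ) = 0 ↔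
        LinearMap.range (Aᵀ).mulVecLin ≤ LinearMap.range (Bᵀ).mulVecLin) := by
  have hGdet : IsUnit (B * Bᵀ).det := (Matrix.isUnit_iff_isUnit_det _).mp hB
  set G := B * Bᵀ with hG
  have hGinvG : G⁻¹ * G = 1 := Matrix.nonsing_inv_mul _ hGdet
  have hGGinv : G * G⁻¹ = 1 := Matrix.mul_nonsing_inv _ hGdet
  have hGsym : Gᵀ = G := by rw [hG, transpose_mul, transpose_transpose]
  have hGinvsym : (G⁻¹)ᵀ = G⁻¹ := by rw [Matrix.transpose_nonsing_inv, hGsym]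
  set Q := Bᵀ * G⁻¹ * B with hQdef
  set Pr := (1 : Matrix (Fin n) (Fin n) ℝ) - Q with hPrdef
  have hQsym : Qᵀ = Q := by
    rw [hQdef, transpose_mul, transpose_mul, hGinvsym, transpose_transpose, Matrix.mul_assoc]
  have hPrsym : Prᵀ = Pr := by rw [hPrdef, transpose_sub, transpose_one, hQsym]
  have hQQ : Q * Q = Q := by
    calc Q * Q = Bᵀ * G⁻¹ * (G * G⁻¹) * B := by
          rw [hQdef, hG]; simp only [Matrix.mul_assoc]
      _ = Q := by rw [hGGinv, Matrix.mul_one]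
  have hPrPr : Pr * Pr = Pr := by
    rw [hPrdef, sub_mul, one_mul, mul_sub, mul_one, hQQ, sub_self, sub_zero]
  have hPrB : Pr * Bᵀ = 0 := by
    have hQB : Q * Bᵀ = Bᵀ := by
      calc Q * Bᵀ = Bᵀ * (G⁻¹ * G) := by rw [hQdef, hG]; simp only [Matrix.mul_assoc]
        _ = Bᵀ := by rw [hGinvG, Matrix.mul_one]
    rw [hPrdef, Matrix.sub_mul, Matrix.one_mul, hQB, sub_self]
  set T := A * Aᵀ - A * Bᵀ * G⁻¹ * B * Aᵀ with hTdef
  have hTQ : T = A * Pr * Aᵀ := by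
    rw [hTdef, hPrdef, Matrix.mul_sub, Matrix.mul_one, Matrix.sub_mul, hQdef]
    simp only [Matrix.mul_assoc]
  have hTN : T = (Pr * Aᵀ)ᵀ * (Pr * Aᵀ) := by
    rw [transpose_mul, transpose_transpose, hPrsym, ← Matrix.mul_assoc,
      Matrix.mul_assoc A Pr Pr, hPrPr]
    exact hTQ
  constructor
  · rw [hTN, ← conjTranspose_eq_transpose_of_trivial]
    exact Matrix.posSemidef_conjTranspose_mul_self _
  · have hzero : T = 0 ↔ Pr * Aᵀ = 0 := by
      constructor
      · intro h
        apply aux_eq_zero_of_mulVec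
        intro x
        have h0 : ((Pr * Aᵀ) *ᵥ x) ⬝ᵥ ((Pr * Aᵀ) *ᵥ x) = 0 := by
          have : x ⬝ᵥ (T *ᵥ x) = 0 := by rw [h]; simp
          rwa [hTN, ← Matrix.mulVec_mulVec, Matrix.dotProduct_mulVec,
            Matrix.vecMul_transpose] at this
        exact dotProduct_self_eq_zero.mp h0
      · intro h; rw [hTN, h, transpose_zero, Matrix.mul_zero]
    rw [hzero]
    constructor
    · intro h
      have hAQ : Aᵀ = Q * Aᵀ := by
        have := h
        rw [hPrdef, Matrix.sub_mul, Matrix.one_mul, sub_eq_zero] at this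
        exact this
      rintro _ ⟨x, rfl⟩
      refine ⟨(G⁻¹ * (B * Aᵀ)) *ᵥ x, ?_⟩
      simp only [Matrix.mulVecLin_apply, Matrix.mulVec_mulVec]
      conv_rhs => rw [hAQ, hQdef]
      simp only [Matrix.mul_assoc]
    · intro h
      apply aux_eq_zero_of_mulVec
      intro x
      obtain ⟨y, hy⟩ := h ⟨x, rfl⟩
      simp only [Matrix.mulVecLin_apply] at hy
      rw [← Matrix.mulVec_mulVec, ← hy, Matrix.mulVec_mulVec, hPrB, Matrix.zero_mulVec]

/-- Theorem 2 of the paper in matrix form. With `J0` positive definite and, for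
each `p`, `Φτ p * (Φτ p)ᵀ` invertible, the matrix
`S = J0 + ∑ p, (Φθ p (Φθ p)ᵀ − Φθ p (Φτ p)ᵀ (Φτ p (Φτ p)ᵀ)⁻¹ Φτ p (Φθ p)ᵀ)`
is positive definite, `J0⁻¹ − S⁻¹` is positive semidefinite, and `S⁻¹ = J0⁻¹`
iff for every `p` the column space of `(Φθ p)ᵀ` is contained in that of
`(Φτ p)ᵀ`. -/
theorem crb_upper_bound_and_equality (P Dθ : ℕ) (np Dp : Fin P → ℕ)
    (J0 : Matrix (Fin Dθ) (Fin Dθ) ℝ) (hJ0 : J0.PosDef)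
    (Φθ : (p : Fin P) → Matrix (Fin Dθ) (Fin (np p)) ℝ)
    (Φτ : (p : Fin P) → Matrix (Fin (Dp p)) (Fin (np p)) ℝ)
    (hτ : ∀ p, IsUnit (Φτ p * (Φτ p)ᵀ))
    (S : Matrix (Fin Dθ) (Fin Dθ) ℝ)
    (hS : S = J0 + ∑ p,
      (Φθ p * (Φθ p)ᵀ - Φθ p * (Φτ p)ᵀ * (Φτ p * (Φτ p)ᵀ)⁻¹ * Φτ p * (Φθ p)ᵀ)) :
    S.PosDef ∧ (J0⁻¹ - S⁻¹).PosSemidef ∧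
      (S⁻¹ = J0⁻¹ ↔ ∀ p,
        LinearMap.range ((Φθ p)ᵀ).mulVecLin ≤ LinearMap.range ((Φτ p)ᵀ).mulVecLin) := by
  classical
  set T : Fin P → Matrix (Fin Dθ) (Fin Dθ) ℝ := fun p =>
    Φθ p * (Φθ p)ᵀ - Φθ p * (Φτ p)ᵀ * (Φτ p * (Φτ p)ᵀ)⁻¹ * Φτ p * (Φθ p)ᵀ with hTdef
  have hS' : S = J0 + ∑ p, T p := hS
  have hTpsd : ∀ p, (T p).PosSemidef := fun p => (aux_block (Φθ p) (Φτ p) (hτ p)).1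
  have hTiff : ∀ p, (T p = 0 ↔
      LinearMap.range ((Φθ p)ᵀ).mulVecLin ≤ LinearMap.range ((Φτ p)ᵀ).mulVecLin) :=
    fun p => (aux_block (Φθ p) (Φτ p) (hτ p)).2
  have hsum : (∑ p, T p).PosSemidef :=
    Finset.sum_induction T Matrix.PosSemidef (fun a b ha hb => ha.add hb)
      Matrix.PosSemidef.zero (fun p _ => hTpsd p)
  have hSpd : S.PosDef := by rw [hS']; exact hJ0.add_posSemidef hsum
  have hSdet : IsUnit S.det := isUnit_iff_ne_zero.mpr hSpd.det_pos.ne'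
  have hJdet : IsUnit J0.det := isUnit_iff_ne_zero.mpr hJ0.det_pos.ne'
  have hD : S - J0 = ∑ p, T p := by rw [hS', add_sub_cancel_left]
  have hDpsd : (S - J0).PosSemidef := by rw [hD]; exact hsum
  have hSinv : S⁻¹.PosDef := hSpd.inv
  have hJinv : J0⁻¹.PosDef := hJ0.inv
  have h1 : S⁻¹ * (S - J0) * J0⁻¹ = J0⁻¹ - S⁻¹ := by
    rw [Matrix.mul_sub, Matrix.sub_mul, Matrix.nonsing_inv_mul _ hSdet, Matrix.one_mul,
      Matrix.mul_assoc, Matrix.mul_nonsing_inv _ hJdet, Matrix.mul_one]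
  have h1' : J0⁻¹ * (S - J0) * S⁻¹ = J0⁻¹ - S⁻¹ := by
    rw [Matrix.mul_sub, Matrix.sub_mul, Matrix.mul_assoc, Matrix.mul_nonsing_inv _ hSdet,
      Matrix.mul_one, Matrix.nonsing_inv_mul _ hJdet, Matrix.one_mul]
  have key : J0⁻¹ - S⁻¹ =
      S⁻¹ * (S - J0) * S⁻¹ + S⁻¹ * (S - J0) * J0⁻¹ * ((S - J0) * S⁻¹) := by
    rw [h1, Matrix.sub_mul]
    simp only [← Matrix.mul_assoc]
    rw [h1']
    abel
  have t1 : (S⁻¹ * (S - J0) * S⁻¹).PosSemidef := by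
    have := hDpsd.mul_mul_conjTranspose_same S⁻¹
    rwa [hSinv.isHermitian.eq] at this
  have t2 : (S⁻¹ * (S - J0) * J0⁻¹ * ((S - J0) * S⁻¹)).PosSemidef := by
    have := hJinv.posSemidef.mul_mul_conjTranspose_same (S⁻¹ * (S - J0))
    rwa [conjTranspose_mul, hDpsd.isHermitian.eq, hSinv.isHermitian.eq] at this
  refine ⟨hSpd, key ▸ (t1.add t2), ?_⟩
  constructor
  · intro h p
    have hSJ : S = J0 := by
      have h2 := congrArg Inv.inv h
      rwa [Matrix.nonsing_inv_nonsing_inv _ hSdet, Matrix.nonsing_inv_nonsing_inv _ hJdet] at h2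
    have hsum0 : ∑ q, T q = 0 := by
      have h3 := hS'
      rw [hSJ] at h3
      exact (left_eq_add.mp h3)
    apply (hTiff p).mp
    have hq : ∀ x : Fin Dθ → ℝ, x ⬝ᵥ (T p *ᵥ x) = 0 := by
      intro x
      have hmv : (∑ q, T q) *ᵥ x = ∑ q, T q *ᵥ x := by
        ext i
        simp only [Matrix.mulVec, dotProduct, Finset.sum_apply, Matrix.sum_apply,
          Finset.sum_mul]
        exact Finset.sum_comm
      have h4 : x ⬝ᵥ ((∑ q, T q) *ᵥ x) = ∑ q, x ⬝ᵥ (T q *ᵥ x) := by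
        rw [hmv]
        simp only [dotProduct, Finset.sum_apply, Finset.mul_sum]
        exact Finset.sum_comm
      have hsumq : ∑ q, x ⬝ᵥ (T q *ᵥ x) = 0 := by
        rw [← h4, hsum0]
        simp
      have hnn : ∀ q ∈ Finset.univ, (0:ℝ) ≤ x ⬝ᵥ (T q *ᵥ x) := by
        intro q _
        have := (hTpsd q).dotProduct_mulVec_nonneg x
        simpa using this
      exact (Finset.sum_eq_zero_iff_of_nonneg hnn).mp hsumq p (Finset.mem_univ p)
    apply aux_eq_zero_of_mulVec
    intro x
    have := ((hTpsd p).dotProduct_mulVec_zero_iff x).mp (by simpa using hq x)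
    exact this
  · intro h
    have h0 : ∀ p, T p = 0 := fun p => (hTiff p).mpr (h p)
    have hsum0 : ∑ p, T p = 0 := Finset.sum_eq_zero (fun p _ => h0 p)
    rw [hS', hsum0, add_zero]
end

section
/- Let D ≥ 1, let f : ℝ^D × ℝ^D → ℝ be differentiable everywhere, and let λ be a real scalar. Then the following are equivalent: (i) for all θ, τ ∈ ℝ^D and all v ∈ ℝ^D, the derivative of f at (θ, τ) in the direction (v, 0) equals λ times the derivative of f at (θ, τ) in the direction (0, v); (ii) for all θ, τ ∈ ℝ^D, f(θ, τ) = f(0, λ·θ + τ). -/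
/-- Characterization from Corollary 1: for a differentiable
`f : ℝ^D × ℝ^D → ℝ`, the directional-derivative condition
`∂f/∂θ [v] = λ · ∂f/∂τ [v]` everywhere is equivalent to `f` depending on
`(θ, τ)` only through `λ·θ + τ`, i.e. `f (θ, τ) = f (0, λ·θ + τ)`. -/
theorem directional_deriv_iff_shift_invariance (D : ℕ) (hD : 1 ≤ D) (lam : ℝ)
    (f : (Fin D → ℝ) × (Fin D → ℝ) → ℝ) (hf : Differentiable ℝ f) :
    (∀ (θ τ v : Fin D → ℝ),
        fderiv ℝ f (θ, τ) (v, 0) = lam * fderiv ℝ f (θ, τ) (0, v)) ↔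
      (∀ θ τ : Fin D → ℝ, f (θ, τ) = f (0, lam • θ + τ)) := by
  constructor
  · intro h θ τ
    set γ : ℝ → (Fin D → ℝ) × (Fin D → ℝ) :=
      fun t => ((1 - t) • θ, (t * lam) • θ + τ) with hγdef
    have key : ∀ t : ℝ, HasDerivAt (fun t => f (γ t)) 0 t := by
      intro t
      have h1 : HasDerivAt (fun t : ℝ => (1 - t) • θ) ((-1 : ℝ) • θ) t := by
        have := ((hasDerivAt_id t).const_sub 1).smul_const θ
        simpa using this
      have h2 : HasDerivAt (fun t : ℝ => (t * lam) • θ + τ) (lam • θ) t := by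
        have := ((hasDerivAt_id t).mul_const lam).smul_const θ
        simpa using this.add_const τ
      have hγ' : HasDerivAt γ ((-1 : ℝ) • θ, lam • θ) t := h1.prodMk h2
      have hcomp := (hf (γ t)).hasFDerivAt.comp_hasDerivAt t hγ'
      have e1 : (((-1 : ℝ) • θ, lam • θ) : (Fin D → ℝ) × (Fin D → ℝ))
          = -(θ, (0 : Fin D → ℝ)) + lam • ((0 : Fin D → ℝ), θ) := by
        simp [Prod.ext_iff]
      have hz : fderiv ℝ f (γ t) ((-1 : ℝ) • θ, lam • θ) = 0 := by
        rw [e1, map_add, map_neg, map_smul]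
        have := h (γ t).1 (γ t).2 θ
        simp only [smul_eq_mul]
        rw [this]
        ring
      rw [hz] at hcomp
      exact hcomp
    have hconst : (fun t => f (γ t)) 0 = (fun t => f (γ t)) 1 := by
      exact is_const_of_deriv_eq_zero (fun t => (key t).differentiableAt)
        (fun t => (key t).deriv) 0 1
    have h0 : γ 0 = (θ, τ) := by simp [hγdef]
    have h1 : γ 1 = (0, lam • θ + τ) := by simp [hγdef]
    simpa [h0, h1] using hconst
  · intro h θ τ v
    set L : ((Fin D → ℝ) × (Fin D → ℝ)) →L[ℝ] ((Fin D → ℝ) × (Fin D → ℝ)) :=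
      (0 : ((Fin D → ℝ) × (Fin D → ℝ)) →L[ℝ] (Fin D → ℝ)).prod
        (lam • ContinuousLinearMap.fst ℝ (Fin D → ℝ) (Fin D → ℝ) +
          ContinuousLinearMap.snd ℝ (Fin D → ℝ) (Fin D → ℝ)) with hLdef
    have hLapp : ∀ p : (Fin D → ℝ) × (Fin D → ℝ), L p = (0, lam • p.1 + p.2) := by
      intro p; simp [hLdef]
    have hfL : f = f ∘ L := by
      funext p
      simp only [Function.comp_apply, hLapp]
      exact h p.1 p.2
    have hfd : fderiv ℝ f (θ, τ) = (fderiv ℝ f (L (θ, τ))).comp L := by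
      conv_lhs => rw [hfL]
      rw [fderiv_comp _ (hf _) L.differentiableAt, L.fderiv]
    have hL1 : L (θ, τ) = (0, lam • θ + τ) := hLapp _
    rw [hfd, hL1]
    simp only [ContinuousLinearMap.comp_apply]
    rw [hLapp (v, 0), hLapp (0, v)]
    simp only [smul_zero, zero_add, add_zero]
    have : ((0 : Fin D → ℝ), lam • v) = lam • ((0 : Fin D → ℝ), v) := by
      simp [Prod.ext_iff]
    rw [this, map_smul, smul_eq_mul]
end
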